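/- For μ > 0 let e(μ) < 0 be the unique number with (μ/(2π)) ∫_T dq/(𝔢(q) - e(μ)) = 1. Then lim_{μ → +∞} e(μ)/μ = -1. -/
import Mathlib


open Real

noncomputable def 𝔢 (q : ℝ) : ℝ := (1 - Real.cos q) ^ 2

/-- `∫_T dq/(𝔢(q) - z)`. -/
noncomputable def I (z : ℝ) : ℝ := ∫ q in (-π)..π, 1 / (𝔢 q - z)

/-- `Δ(μ; z) = 1 - (μ/(2π)) ∫_T dq/(𝔢(q) - z)`. -/
noncomputable def Δ (μ z : ℝ) : ℝ := 1 - μ / (2 * π) * I z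

lemma e_bounds (q : ℝ) : 0 ≤ 𝔢 q ∧ 𝔢 q ≤ 4 := by
  have h1 := Real.neg_one_le_cos q
  have h2 := Real.cos_le_one q
  unfold 𝔢
  constructor <;> nlinarith [sq_nonneg (1 - Real.cos q)]

lemma cont_int (z : ℝ) (hz : z < 0) :
    Continuous fun q => 1 / (𝔢 q - z) := by
  apply Continuous.div continuous_const
  · exact (Continuous.pow (by continuity) 2).sub continuous_const
  · intro q
    have := (e_bounds q).1
    nlinarith

lemma I_le (z : ℝ) (hz : z < 0) : I z ≤ 2 * π / (-z) := by
  have hπ := Real.pi_pos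
  have h1 : I z ≤ ∫ _ in (-π)..π, 1 / (-z) := by
    apply intervalIntegral.integral_mono_on (by linarith)
    · exact ((cont_int z hz).intervalIntegrable _ _)
    · exact intervalIntegrable_const
    · intro q _
      have h0 := (e_bounds q).1
      apply one_div_le_one_div_of_le (by linarith)
      linarith
  rw [intervalIntegral.integral_const, smul_eq_mul] at h1
  have : (π - -π) * (1 / -z) = 2 * π / -z := by ring
  linarith [this ▸ h1]

lemma I_ge (z : ℝ) (hz : z < 0) : 2 * π / (4 - z) ≤ I z := by
  have hπ := Real.pi_pos
  have h1 : (∫ _ in (-π)..π, 1 / (4 - z)) ≤ I z := by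
    apply intervalIntegral.integral_mono_on (by linarith)
    · exact intervalIntegrable_const
    · exact ((cont_int z hz).intervalIntegrable _ _)
    · intro q _
      have h0 := (e_bounds q).1
      have h4 := (e_bounds q).2
      apply one_div_le_one_div_of_le (by linarith)
      linarith
  rw [intervalIntegral.integral_const, smul_eq_mul] at h1
  have : (π - -π) * (1 / (4 - z)) = 2 * π / (4 - z) := by ring
  linarith [this ▸ h1]

theorem e_asymptotic_at_infty (e : ℝ → ℝ)
    (he : ∀ μ > (0 : ℝ), e μ < 0 ∧ μ / (2 * π) * I (e μ) = 1) :
    Filter.Tendsto (fun μ => e μ / μ) Filter.atTop (nhds (-1)) := by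
  have hπ := Real.pi_pos
  have key : ∀ μ > (0 : ℝ), -1 ≤ e μ / μ ∧ e μ / μ ≤ -1 + 4 / μ := by
    intro μ hμ
    obtain ⟨hneg, heq⟩ := he μ hμ
    have hI : I (e μ) = 2 * π / μ := by
      field_simp at heq ⊢; linarith
    have hle := I_le (e μ) hneg
    have hge := I_ge (e μ) hneg
    rw [hI] at hle hge
    -- 2π/(4 - e μ) ≤ 2π/μ  ⇒ μ ≤ 4 - e μ
    have h2π : (0:ℝ) < 2 * π := by linarith
    have hμ4 : μ ≤ 4 - e μ := by
      rw [div_le_div_iff₀ (by linarith) hμ] at hge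
      nlinarith
    have hμ2 : -e μ ≤ μ := by
      rw [div_le_div_iff₀ hμ (by linarith)] at hle
      nlinarith
    constructor
    · rw [le_div_iff₀ hμ]; linarith
    · rw [div_le_iff₀ hμ]; have : -1 * μ + 4 / μ * μ = -μ + 4 := by field_simp
      nlinarith [this]
  have hub : Filter.Tendsto (fun μ : ℝ => -1 + 4 / μ) Filter.atTop (nhds (-1)) := by
    have h4 : Filter.Tendsto (fun μ : ℝ => 4 / μ) Filter.atTop (nhds 0) :=
      Filter.Tendsto.div_atTop tendsto_const_nhds Filter.tendsto_id
    simpa using (tendsto_const_nhds (x := (-1:ℝ)) (f := Filter.atTop)).add h4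
  apply tendsto_of_tendsto_of_tendsto_of_le_of_le' tendsto_const_nhds hub
  · filter_upwards [Filter.eventually_gt_atTop 0] with μ hμ using (key μ hμ).1
  · filter_upwards [Filter.eventually_gt_atTop 0] with μ hμ using (key μ hμ).2
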